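/- arXiv:2307.12331 — 3 statements merged into one kernel-verified Lean document; each statement's English description precedes it below -/
import Mathlib

section
/- Let u be a freely reduced word in the letters A ∪ A^{-1} and let v be a (contiguous) subword of u. Then the simple (g+1)-length of v is at most the simple (g+1)-length of u, i.e. |v|_{g+1}^{simple} ≤ |u|_{g+1}^{simple}. -/
/-- A letter of the alphabet `A ∪ A⁻¹`: a generator index together with a sign. -/
abbrev Letter (g : ℕ) := Fin g × Bool

/-- The formal inverse of a letter. -/
def Letter.inv {g : ℕ} (a : Letter g) : Letter g := (a.1, !a.2)

/-- A word is (freely) reduced if it equals its free reduction. -/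
def IsReducedWord {g : ℕ} (w : List (Letter g)) : Prop :=
  FreeGroup.reduce w = w

/-- The Whitehead graph of a word `x`: vertices are the letters `A ∪ A⁻¹`, and each
pair of consecutive letters `a b` occurring in `x` contributes an edge from `a` to `b⁻¹`. -/
def whiteheadGraph (g : ℕ) (x : List (Letter g)) : SimpleGraph (Letter g) where
  Adj u v := u ≠ v ∧ ([u, Letter.inv v] <:+: x ∨ [v, Letter.inv u] <:+: x)
  symm := by
    constructor
    intro u v h
    exact ⟨Ne.symm h.1, h.2.symm⟩
  loopless := by
    constructor
    intro u h
    exact h.1 rfl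

/-- A graph has a cut vertex if it is disconnected, or some vertex can be removed to
disconnect it. -/
def HasCutVertex {V : Type*} (G : SimpleGraph V) : Prop :=
  ¬ G.Connected ∨ ∃ v : V, ¬ (G.induce {u | u ≠ v}).Connected

/-- The simple `(g+1)`-length of a reduced word `w`: it is `0` if the Whitehead graph of
`w` has a cut vertex, and otherwise the greatest `t` such that `w` is a concatenation of
`t` subwords each of whose Whitehead graphs has no cut vertex. -/
noncomputable def simpleLength (g : ℕ) (w : List (Letter g)) : ℕ :=
  letI := Classical.propDecidable (HasCutVertex (whiteheadGraph g w))
  if HasCutVertex (whiteheadGraph g w) then 0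
  else sSup {t : ℕ | ∃ ws : List (List (Letter g)),
    ws.length = t ∧ ws.flatten = w ∧
    ∀ u ∈ ws, ¬ HasCutVertex (whiteheadGraph g u)}

/- ------- auxiliary lemmas ------- -/

lemma whitehead_mono {g : ℕ} {x y : List (Letter g)} (h : x <:+: y) :
    whiteheadGraph g x ≤ whiteheadGraph g y := by
  rintro a b ⟨hne, h2⟩
  exact ⟨hne, h2.imp (fun h' => h'.trans h) (fun h' => h'.trans h)⟩

lemma not_hasCutVertex_mono {V : Type*} {G H : SimpleGraph V} (hle : G ≤ H)
    (h : ¬ HasCutVertex G) : ¬ HasCutVertex H := by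
  rw [HasCutVertex] at h ⊢
  push_neg at h ⊢
  refine ⟨h.1.mono hle, fun v => (h.2 v).mono ?_⟩
  intro a b hab
  exact hle hab

lemma no_cut_of_infix {g : ℕ} {x y : List (Letter g)} (h : x <:+: y)
    (hx : ¬ HasCutVertex (whiteheadGraph g x)) : ¬ HasCutVertex (whiteheadGraph g y) :=
  not_hasCutVertex_mono (whitehead_mono h) hx

lemma hasCutVertex_nil {g : ℕ} (hg : 2 ≤ g) :
    HasCutVertex (whiteheadGraph g ([] : List (Letter g))) := by
  left
  intro h
  obtain ⟨w⟩ := h.preconnected (⟨0, by omega⟩, true) (⟨0, by omega⟩, false)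
  cases w with
  | cons hadj _ =>
    obtain ⟨-, h2 | h2⟩ := hadj <;> simpa using h2.sublist.length_le

lemma nonempty_of_no_cut {g : ℕ} (hg : 2 ≤ g) {w : List (Letter g)}
    (h : ¬ HasCutVertex (whiteheadGraph g w)) : w ≠ [] := by
  rintro rfl
  exact h (hasCutVertex_nil hg)

lemma length_le_flatten_length {α : Type*} :
    ∀ ws : List (List α), (∀ u ∈ ws, u ≠ []) → ws.length ≤ ws.flatten.length := by
  intro ws
  induction ws with
  | nil => simp
  | cons a l ih =>
    intro h
    have ha : a ≠ [] := h a (by simp)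
    have : 1 ≤ a.length := by
      cases a with
      | nil => exact absurd rfl ha
      | cons _ _ => simp
    have h2 := ih (fun u hu => h u (by simp [hu]))
    simp only [List.length_cons, List.flatten_cons, List.length_append] at h2 ⊢
    omega

/-- Append `s` to the last element of a list of lists. -/
def appendLast {α : Type*} (s : List α) : List (List α) → List (List α)
  | [] => []
  | [a] => [a ++ s]
  | a :: b :: l => a :: appendLast s (b :: l)

lemma flatten_appendLast {α : Type*} (s : List α) :
    ∀ ws : List (List α), ws ≠ [] → (appendLast s ws).flatten = ws.flatten ++ s
  | [], h => absurd rfl h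
  | [a], _ => by simp [appendLast]
  | a :: b :: l, _ => by
      simp [appendLast, flatten_appendLast s (b :: l) (by simp)]

lemma length_appendLast {α : Type*} (s : List α) :
    ∀ ws : List (List α), (appendLast s ws).length = ws.length
  | [] => rfl
  | [a] => rfl
  | a :: b :: l => by
      simp only [appendLast, List.length_cons, length_appendLast s (b :: l)]

lemma mem_appendLast {α : Type*} (s : List α) :
    ∀ ws : List (List α), ∀ u ∈ appendLast s ws, ∃ w ∈ ws, u = w ∨ u = w ++ s
  | [], u, hu => by simp [appendLast] at hu
  | [a], u, hu => by
      simp only [appendLast, List.mem_singleton] at hu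
      exact ⟨_, List.mem_cons_self, Or.inr hu⟩
  | a :: b :: l, u, hu => by
      simp only [appendLast, List.mem_cons] at hu
      rcases hu with rfl | hu
      · exact ⟨_, List.mem_cons_self, Or.inl rfl⟩
      · obtain ⟨w, hw, hw2⟩ := mem_appendLast s (b :: l) u hu
        exact ⟨w, by simp [hw], hw2⟩

/-- If `u` is a freely reduced word and `v` is a contiguous subword of `u`, then the simple
`(g+1)`-length of `v` is at most that of `u`. -/
theorem simpleLength_le_of_isInfix (g : ℕ) (hg : 2 ≤ g)
    (u v : List (Letter g)) (hu : IsReducedWord u) (hv : v <:+: u) :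
    simpleLength g v ≤ simpleLength g u := by
  classical
  by_cases hcv : HasCutVertex (whiteheadGraph g v)
  · simp [simpleLength, hcv]
  · have hcu : ¬ HasCutVertex (whiteheadGraph g u) := no_cut_of_infix hv hcv
    rw [simpleLength, simpleLength, if_neg hcv, if_neg hcu]
    refine csSup_le_csSup ?_ ?_ ?_
    · refine ⟨u.length, fun t ht => ?_⟩
      obtain ⟨ws, hlen, hflat, hall⟩ := ht
      calc t = ws.length := hlen.symm
        _ ≤ ws.flatten.length :=
          length_le_flatten_length ws (fun w hw => nonempty_of_no_cut hg (hall w hw))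
        _ = u.length := by rw [hflat]
    · exact ⟨1, [v], rfl, by simp, by simpa using hcv⟩
    · rintro t ⟨ws, hlen, hflat, hall⟩
      obtain ⟨p, s, hps⟩ := hv
      cases ws with
      | nil =>
        exfalso
        exact nonempty_of_no_cut hg hcv (by simpa using hflat.symm)
      | cons a l =>
        refine ⟨appendLast s ((p ++ a) :: l), ?_, ?_, ?_⟩
        · rw [length_appendLast]
          simpa using hlen
        · rw [flatten_appendLast s _ (by simp), ← hps]
          simp only [List.flatten_cons] at hflat ⊢
          rw [← hflat]
          simp
        · intro w hw
          obtain ⟨w0, hw0, hcase⟩ := mem_appendLast s _ w hw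
          have hkey : ∃ z ∈ (a :: l), z <:+: w := by
            rcases List.mem_cons.mp hw0 with rfl | hw0'
            · refine ⟨a, by simp, ?_⟩
              rcases hcase with rfl | rfl
              · exact ⟨p, [], by simp⟩
              · exact ⟨p, s, by simp⟩
            · refine ⟨w0, by simp [hw0'], ?_⟩
              rcases hcase with rfl | rfl
              · exact List.infix_rfl
              · exact ⟨[], s, by simp⟩
          obtain ⟨z, hz, hzw⟩ := hkey
          exact no_cut_of_infix hzw (hall z hz)
end

section
/- Let u and v be freely reduced words in the letters A ∪ A^{-1} with |v|_{g+1}^{simple} = 0, and let w be the unique reduced word representing the element uv of the free group F_g. Then |w|_{g+1}^{simple} ≤ |u|_{g+1}^{simple} + 1. -/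
namespace SLAux

variable {g : ℕ}

/-- the no-cancellation relation on consecutive letters -/
abbrev R (g : ℕ) : Letter g → Letter g → Prop := fun a b => b ≠ (a.1, !a.2)

lemma isReduced_iff_chain' (w : List (Letter g)) :
    IsReducedWord w ↔ List.Chain' (R g) w := by
  constructor
  · intro h
    rw [List.Chain', List.isChain_iff_getElem]
    intro i hi hEq
    have h1 : i < w.length := by omega
    have h2 : i + 1 < w.length := by omega
    have key : FreeGroup.reduce w =
        w.take i ++ ((w.get ⟨i, h1⟩).1, (w.get ⟨i, h1⟩).2) ::
          ((w.get ⟨i, h1⟩).1, !(w.get ⟨i, h1⟩).2) :: w.drop (i + 2) := by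
      rw [h, Prod.mk.eta, List.get_eq_getElem, ← hEq]
      conv_lhs => rw [← List.take_append_drop i w]
      congr 1
      rw [List.drop_eq_getElem_cons h1, List.drop_eq_getElem_cons h2]
    exact FreeGroup.reduce.not key
  · intro h
    rcases Relation.ReflTransGen.cases_head (FreeGroup.reduce.red (L := w)) with heq | ⟨c, hstep, _⟩
    · exact heq.symm
    · exfalso
      cases hstep with
      | @not L₁ L₂ x b =>
        have hc : List.Chain' (R g) ((x, b) :: (x, !b) :: L₂) :=
          h.infix ⟨L₁, [], by simp⟩
        exact (List.isChain_cons_cons.1 hc).1 rfl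

lemma infix_reduced {w x : List (Letter g)} (h : IsReducedWord w) (hx : x <:+: w) :
    IsReducedWord x :=
  (isReduced_iff_chain' x).2 (((isReduced_iff_chain' w).1 h).infix hx)

lemma cancel : ∀ (n : ℕ) (u v : List (Letter g)), u.length ≤ n → IsReducedWord u →
    IsReducedWord v →
    ∃ u' v', u' <+: u ∧ v' <:+ v ∧ FreeGroup.reduce (u ++ v) = u' ++ v' := by
  intro n
  induction n with
  | zero =>
    intro u v hlen hu hv
    have : u = [] := List.eq_nil_of_length_eq_zero (Nat.le_zero.mp hlen)
    subst this
    exact ⟨[], v, List.nil_prefix, List.suffix_rfl, by simpa [IsReducedWord] using hv⟩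
  | succ n ih =>
    intro u v hlen hu hv
    rcases List.eq_nil_or_concat u with rfl | ⟨u₀, a, rfl⟩
    · exact ⟨[], v, List.nil_prefix, List.suffix_rfl, by simpa [IsReducedWord] using hv⟩
    simp only [List.concat_eq_append] at hlen hu ⊢
    rcases v with _ | ⟨b, v₀⟩
    · exact ⟨u₀ ++ [a], [], List.prefix_rfl, List.suffix_rfl, by simpa [IsReducedWord] using hu⟩
    by_cases hcnl : b = (a.1, !a.2)
    · subst hcnl
      have heq : (u₀ ++ [a]) ++ (a.1, !a.2) :: v₀ = u₀ ++ (a.1, a.2) :: (a.1, !a.2) :: v₀ := by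
        simp
      have hre : FreeGroup.reduce ((u₀ ++ [a]) ++ (a.1, !a.2) :: v₀)
          = FreeGroup.reduce (u₀ ++ v₀) := by
        rw [heq]; exact FreeGroup.reduce.Step.eq FreeGroup.Red.Step.not
      have hu₀ : IsReducedWord u₀ := infix_reduced hu (List.prefix_append u₀ [a]).isInfix
      have hv₀ : IsReducedWord v₀ := infix_reduced hv (List.suffix_cons _ v₀).isInfix
      obtain ⟨u', v', hp, hs, he⟩ := ih u₀ v₀ (by simp at hlen; omega) hu₀ hv₀
      exact ⟨u', v', hp.trans (List.prefix_append _ _), hs.trans (List.suffix_cons _ _),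
        hre.trans he⟩
    · refine ⟨u₀ ++ [a], b :: v₀, List.prefix_rfl, List.suffix_rfl, ?_⟩
      rw [show (FreeGroup.reduce ((u₀ ++ [a]) ++ b :: v₀) = (u₀ ++ [a]) ++ b :: v₀) =
        IsReducedWord ((u₀ ++ [a]) ++ b :: v₀) from rfl]
      refine (isReduced_iff_chain' _).2 (List.isChain_append.2
        ⟨(isReduced_iff_chain' _).1 hu, (isReduced_iff_chain' _).1 hv, ?_⟩)
      intro x hx y hy
      simp at hx hy
      subst hx; subst hy
      exact hcnl



variable {g : ℕ}

lemma wg_mono {x y : List (Letter g)} (h : x <:+: y) :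
    whiteheadGraph g x ≤ whiteheadGraph g y :=
  fun _ _ h' => ⟨h'.1, h'.2.imp (fun h'' => h''.trans h) (fun h'' => h''.trans h)⟩

lemma not_hasCutVertex_mono {V : Type*} {G H : SimpleGraph V} (h : G ≤ H)
    (hG : ¬ HasCutVertex G) : ¬ HasCutVertex H := by
  unfold HasCutVertex at *
  push_neg at hG ⊢
  refine ⟨hG.1.mono h, fun v => (hG.2 v).mono ?_⟩
  intro a b hab
  exact h hab

lemma ne_nil_of_not_hasCutVertex (hg : 2 ≤ g) {x : List (Letter g)}
    (hx : ¬ HasCutVertex (whiteheadGraph g x)) : x ≠ [] := by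
  rintro rfl
  apply hx
  left
  intro hconn
  have h01 : ((⟨0, by omega⟩ : Fin g), true) ≠ ((⟨1, by omega⟩ : Fin g), true) := by
    simp [Prod.ext_iff, Fin.ext_iff]
  obtain ⟨p⟩ := hconn.preconnected ((⟨0, by omega⟩ : Fin g), true) ((⟨1, by omega⟩ : Fin g), true)
  cases p with
  | cons hadj _ =>
    rcases hadj.2 with h | h <;> simp at h

lemma length_le_flatten {α : Type*} : ∀ {ws : List (List α)}, (∀ u ∈ ws, u ≠ []) →
    ws.length ≤ ws.flatten.length
  | [], _ => le_rfl
  | u :: ws, h => by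
    have h1 : 1 ≤ u.length :=
      List.length_pos_iff.2 (h u List.mem_cons_self)
    have h2 := length_le_flatten (fun x hx => h x (List.mem_cons_of_mem u hx))
    simp only [List.flatten_cons, List.length_append, List.length_cons]
    omega

lemma bddAbove_S (hg : 2 ≤ g) (w : List (Letter g)) :
    BddAbove {t : ℕ | ∃ ws : List (List (Letter g)),
      ws.length = t ∧ ws.flatten = w ∧
      ∀ u ∈ ws, ¬ HasCutVertex (whiteheadGraph g u)} := by
  refine ⟨w.length, ?_⟩
  rintro t ⟨ws, rfl, rfl, h3⟩
  exact length_le_flatten (fun x hx => ne_nil_of_not_hasCutVertex hg (h3 x hx))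

lemma cut_of_infix (hg : 2 ≤ g) {v x : List (Letter g)} (hv0 : simpleLength g v = 0)
    (hx : x <:+: v) : HasCutVertex (whiteheadGraph g x) := by
  by_contra hx'
  have hv' : ¬ HasCutVertex (whiteheadGraph g v) := not_hasCutVertex_mono (wg_mono hx) hx'
  rw [simpleLength, if_neg hv'] at hv0
  have h1 : 1 ∈ {t : ℕ | ∃ ws : List (List (Letter g)),
      ws.length = t ∧ ws.flatten = v ∧
      ∀ u ∈ ws, ¬ HasCutVertex (whiteheadGraph g u)} := by
    refine ⟨[v], rfl, by simp, ?_⟩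
    intro u hu
    simp at hu
    subst hu
    exact hv'
  have := le_csSup (bddAbove_S hg v) h1
  omega

end SLAux

/-- If `u, v` are freely reduced words with `|v|ₛ = 0` and `w` is the unique reduced word
representing the element `uv` of `F_g`, then `|w|ₛ ≤ |u|ₛ + 1`. -/
theorem simpleLength_mul_le_of_eq_zero (g : ℕ) (hg : 2 ≤ g)
    (u v : List (Letter g)) (hu : IsReducedWord u) (hv : IsReducedWord v)
    (hv0 : simpleLength g v = 0) :
    simpleLength g (FreeGroup.reduce (u ++ v)) ≤ simpleLength g u + 1 := by
  rw [simpleLength]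
  split_ifs with hcut
  · exact Nat.zero_le _
  apply csSup_le'
  rintro t ⟨ws, rfl, hflat, hfree⟩
  obtain ⟨u', v', hpu, hsv, hw⟩ := SLAux.cancel u.length u v le_rfl hu hv
  by_cases ht : ws.length ≤ 1
  · omega
  push_neg at ht
  have hwsne : ws ≠ [] := by rintro rfl; simp at ht
  have hsplit : ws.dropLast ++ [ws.getLast hwsne] = ws := List.dropLast_append_getLast hwsne
  set ws₁ := ws.dropLast with hws₁
  set last := ws.getLast hwsne with hlast
  have hw2 : ws₁.flatten ++ last = FreeGroup.reduce (u ++ v) := by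
    rw [← hflat]
    conv_rhs => rw [← hsplit]
    simp
  have hpre1 : ws₁.flatten <+: FreeGroup.reduce (u ++ v) := ⟨last, hw2⟩
  have hpu' : u' <+: FreeGroup.reduce (u ++ v) := by rw [hw]; exact List.prefix_append u' v'
  have hclaim : ws₁.flatten <+: u' := by
    rcases List.prefix_or_prefix_of_prefix hpre1 hpu' with h | h
    · exact h
    exfalso
    have hlsuf : last <:+ FreeGroup.reduce (u ++ v) := ⟨ws₁.flatten, hw2⟩
    have hvsuf : v' <:+ FreeGroup.reduce (u ++ v) := by rw [hw]; exact List.suffix_append u' v'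
    have hlen : last.length ≤ v'.length := by
      have e1 := congrArg List.length hw2
      have e2 := congrArg List.length hw
      have e3 := h.length_le
      simp only [List.length_append] at e1 e2
      omega
    have hlv : last <:+ v' := List.suffix_of_suffix_length_le hlsuf hvsuf hlen
    exact hfree last (List.getLast_mem hwsne)
      (SLAux.cut_of_infix hg hv0 (hlv.trans hsv).isInfix)
  obtain ⟨rest, hrest⟩ : ws₁.flatten <+: u := hclaim.trans hpu
  have hws₁ne : ws₁ ≠ [] := by
    have := congrArg List.length hsplit
    intro h
    rw [h] at this
    simp at this
    omega
  have hsplit2 : ws₁.dropLast ++ [ws₁.getLast hws₁ne] = ws₁ := List.dropLast_append_getLast hws₁ne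
  set p := ws₁.getLast hws₁ne with hp
  set ws₂ := ws₁.dropLast with hws₂
  have hpmem : p ∈ ws := (List.dropLast_sublist ws).subset (List.getLast_mem hws₁ne)
  have hflat1 : ws₂.flatten ++ p = ws₁.flatten := by
    conv_rhs => rw [← hsplit2]
    simp
  have hinfu : ws₁.flatten <:+: u := ⟨[], rest, by simp [hrest]⟩
  have hnocut_u : ¬ HasCutVertex (whiteheadGraph g u) := by
    have hpinf : p <:+: u := (List.IsSuffix.isInfix ⟨ws₂.flatten, hflat1⟩).trans hinfu
    exact SLAux.not_hasCutVertex_mono (SLAux.wg_mono hpinf) (hfree p hpmem)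
  rw [simpleLength, if_neg hnocut_u]
  have hmem : ws.length - 1 ∈ {t : ℕ | ∃ ws' : List (List (Letter g)),
      ws'.length = t ∧ ws'.flatten = u ∧
      ∀ x ∈ ws', ¬ HasCutVertex (whiteheadGraph g x)} := by
    refine ⟨ws₂ ++ [p ++ rest], ?_, ?_, ?_⟩
    · have e1 := congrArg List.length hsplit
      have e2 := congrArg List.length hsplit2
      simp only [List.length_append, List.length_cons, List.length_nil] at e1 e2 ⊢
      omega
    · simp only [List.flatten_append, List.flatten_cons, List.flatten_nil, List.append_nil]
      rw [← List.append_assoc, hflat1, hrest]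
    · intro x hx
      rcases List.mem_append.1 hx with hx | hx
      · exact hfree x ((List.dropLast_sublist ws₁).subset hx |> (List.dropLast_sublist ws).subset)
      · simp at hx
        subst hx
        exact SLAux.not_hasCutVertex_mono (SLAux.wg_mono (List.prefix_append p rest).isInfix)
          (hfree p hpmem)
  have := le_csSup (SLAux.bddAbove_S hg u) hmem
  omega
end

section
/- Let g ≥ 4 and for each integer t ≥ 1 let b_t = a_1^{t+1} a_2^{t+1} ⋯ a_g^{t+1} a_1^{t+1} a_2^{t+1} a_1^{t+1} ∈ F_g. Then for every integer s, the unique reduced word representing the power b_t^s in F_g has simple (g+1)-length at least |s|. -/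
/-- The `i`-th generator `a_{i+1}` of the free group `F_g` (or `1` if `i ≥ g`). -/
def gen (g : ℕ) (i : ℕ) : FreeGroup (Fin g) :=
  if h : i < g then FreeGroup.of ⟨i, h⟩ else 1

/-- The element `b_t = a_1^{t+1} a_2^{t+1} ⋯ a_g^{t+1} a_1^{t+1} a_2^{t+1} a_1^{t+1}` of `F_g`. -/
def bElem (g t : ℕ) : FreeGroup (Fin g) :=
  (List.ofFn (fun i : Fin g => (FreeGroup.of i) ^ (t + 1))).prod *
    (gen g 0) ^ (t + 1) * (gen g 1) ^ (t + 1) * (gen g 0) ^ (t + 1)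

namespace CutAux

lemma noCut_of_cycle {V : Type*} {G : SimpleGraph V} (n : ℕ) (hn : 3 ≤ n) (f : ℕ → V)
    (hper : ∀ k, f (k + n) = f k)
    (hsurj : ∀ v, ∃ k, k < n ∧ f k = v)
    (hinj : ∀ k l, k < n → l < n → f k = f l → k = l)
    (hadj : ∀ k, k < n → G.Adj (f k) (f (k + 1))) :
    ¬ HasCutVertex G := by
  have hn0 : 0 < n := by omega
  have hmod : ∀ k, f k = f (k % n) := by
    intro k
    induction k using Nat.strong_induction_on with
    | _ k ih =>
      rcases lt_or_ge k n with h | h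
      · rw [Nat.mod_eq_of_lt h]
      · have e : k - n + n = k := by omega
        rw [← e, hper, ih (k - n) (by omega), Nat.add_mod_right]
  have hadj' : ∀ k, G.Adj (f k) (f (k + 1)) := by
    intro k
    have h2 : f (k + 1) = f (k % n + 1) := by
      rw [hmod (k + 1), hmod (k % n + 1)]
      exact congrArg f ((Nat.mod_modEq k n).add_right 1).symm
    rw [hmod k, h2]
    exact hadj _ (Nat.mod_lt _ hn0)
  have hreach : ∀ k d, G.Reachable (f k) (f (k + d)) := by
    intro k d
    induction d with
    | zero => exact SimpleGraph.Reachable.refl _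
    | succ d ih => exact ih.trans (hadj' (k + d)).reachable
  have hconn : G.Connected := by
    haveI : Nonempty V := ⟨f 0⟩
    refine ⟨fun u v => ?_⟩
    obtain ⟨k, hk, rfl⟩ := hsurj u
    obtain ⟨l, hl, rfl⟩ := hsurj v
    have : f (k + (n + l - k)) = f l := by
      have e : k + (n + l - k) = n + l := by omega
      rw [e, hmod (n + l), Nat.add_mod_left, ← hmod]
    exact this ▸ hreach k (n + l - k)
  rintro (hc | ⟨v, hv⟩)
  · exact hc hconn
  obtain ⟨m, hm, rfl⟩ := hsurj v
  apply hv
  -- every vertex `f a` with `a % n ≠ m` is in the punctured set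
  have hne : ∀ a, a % n ≠ m → f a ≠ f m := by
    intro a ha heq
    rw [hmod a] at heq
    exact ha (hinj _ _ (Nat.mod_lt _ hn0) hm heq)
  have hmem : ∀ j, j + 2 ≤ n → (m + 1 + j) % n ≠ m := by
    intro j hj
    have h2n : m + 1 + j < 2 * n := by omega
    rcases lt_or_ge (m + 1 + j) n with h | h
    · rw [Nat.mod_eq_of_lt h]; omega
    · rw [Nat.mod_eq_sub_mod h, Nat.mod_eq_of_lt (by omega)]; omega
  set S : Set V := {u | u ≠ f m} with hS
  have hbase : f (m + 1) ∈ S := hne _ (hmem 0 (by omega))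
  have key : ∀ j (hj : j + 2 ≤ n),
      (G.induce S).Reachable ⟨f (m + 1), hbase⟩ ⟨f (m + 1 + j), hne _ (hmem j hj)⟩ := by
    intro j hj
    induction j with
    | zero => exact SimpleGraph.Reachable.refl _
    | succ j ih =>
      refine (ih (by omega)).trans ?_
      have hstep : (G.induce S).Adj ⟨f (m + 1 + j), hne _ (hmem j (by omega))⟩
          ⟨f (m + 1 + j + 1), hne _ (hmem (j+1) hj)⟩ := by
        exact hadj' (m + 1 + j)
      exact hstep.reachable
  have hrep : ∀ x : S, ∃ j, ∃ hj : j + 2 ≤ n, (⟨f (m + 1 + j), hne _ (hmem j hj)⟩ : S) = x := by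
    rintro ⟨u, hu⟩
    obtain ⟨k, hk, rfl⟩ := hsurj u
    have hkm : k ≠ m := fun h => hu (by rw [h])
    rcases lt_or_ge m k with h | h
    · refine ⟨k - m - 1, by omega, ?_⟩
      have : m + 1 + (k - m - 1) = k := by omega
      exact Subtype.ext (congrArg f this)
    · refine ⟨k + n - m - 1, by omega, ?_⟩
      have : m + 1 + (k + n - m - 1) = k + n := by omega
      exact Subtype.ext ((congrArg f this).trans (hper k))
  haveI : Nonempty ↥S := ⟨⟨f (m + 1), hbase⟩⟩
  refine ⟨fun x y => ?_⟩
  obtain ⟨j, hj, rfl⟩ := hrep x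
  obtain ⟨j', hj', rfl⟩ := hrep y
  exact (key j hj).symm.trans (key j' hj')



/-- The block `a_i^{t+1}` as a word. -/
def blk (g t : ℕ) (i : Fin g) : List (Letter g) := List.replicate (t + 1) (i, true)

/-- The base word representing `bElem`. -/
def baseWord (g t : ℕ) (h1 : 1 < g) : List (Letter g) :=
  (List.ofFn (blk g t)).flatten ++ blk g t ⟨0, by omega⟩ ++ blk g t ⟨1, h1⟩ ++
    blk g t ⟨0, by omega⟩

lemma flatten_replicate_singleton {α : Type*} (n : ℕ) (a : α) :
    (List.replicate n [a]).flatten = List.replicate n a := by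
  induction n with
  | zero => rfl
  | succ n ih => simp [List.replicate_succ, ih]

lemma of_pow {g : ℕ} (x : Fin g) (n : ℕ) :
    (FreeGroup.of x) ^ n = FreeGroup.mk (List.replicate n (x, true)) := by
  show (FreeGroup.mk [(x, true)]) ^ n = _
  rw [FreeGroup.pow_mk, flatten_replicate_singleton]

lemma prod_map_mk {g : ℕ} (L : List (List (Fin g × Bool))) :
    (L.map FreeGroup.mk).prod = FreeGroup.mk L.flatten := by
  induction L with
  | nil => rfl
  | cons l L ih => simp [List.flatten_cons, ih, ← FreeGroup.mul_mk]

lemma bElem_eq (g t : ℕ) (h1 : 1 < g) :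
    bElem g t = FreeGroup.mk (baseWord g t h1) := by
  have h0 : (0:ℕ) < g := by omega
  unfold bElem baseWord
  rw [gen, dif_pos h0, gen, dif_pos h1]
  simp only [of_pow]
  rw [show (List.ofFn fun i : Fin g => FreeGroup.mk (List.replicate (t+1) (i, true))) =
      (List.ofFn (blk g t)).map FreeGroup.mk from by rw [List.map_ofFn]; rfl]
  rw [prod_map_mk]
  simp only [FreeGroup.mul_mk]
  rfl

lemma mem_baseWord_true (g t : ℕ) (h1 : 1 < g) :
    ∀ p ∈ baseWord g t h1, p.2 = true := by
  intro p hp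
  simp only [baseWord, blk, List.mem_append, List.mem_flatten, List.mem_ofFn,
    List.mem_replicate, Set.mem_range] at hp
  rcases hp with ((⟨l, ⟨i, rfl⟩, hl⟩ | h) | h) | h <;>
    simp_all [List.mem_replicate]

lemma reduce_const {α : Type*} [DecidableEq α] (b : Bool) :
    ∀ (L : List (α × Bool)), (∀ p ∈ L, p.2 = b) → FreeGroup.reduce L = L := by
  intro L
  induction L with
  | nil => simp
  | cons x L ih =>
    intro h
    rw [FreeGroup.reduce.cons, ih (fun p hp => h p (List.mem_cons_of_mem _ hp))]
    cases L with
    | nil => rfl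
    | cons y L' =>
      have hx : x.2 = b := h x (by simp)
      have hy : y.2 = b := h y (by simp)
      simp [hx, hy]




lemma pair_self_infix {α : Type*} (x : α) (n : ℕ) (hn : 2 ≤ n) :
    [x, x] <:+: List.replicate n x := by
  obtain ⟨m, rfl⟩ : ∃ m, n = m + 2 := ⟨n - 2, by omega⟩
  exact ⟨[], List.replicate m x, by simp [List.replicate_succ]⟩

lemma pair_junction_infix {α : Type*} (x y : α) (n : ℕ) (hn : 1 ≤ n) (l : List α) :
    [x, y] <:+: List.replicate n x ++ (y :: l) := by
  obtain ⟨m, rfl⟩ : ∃ m, n = m + 1 := ⟨n - 1, by omega⟩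
  refine ⟨List.replicate m x, l, ?_⟩
  simp [List.replicate_succ', List.append_assoc]

lemma junction_flatten {α : Type*} :
    ∀ (n : ℕ) (f : Fin (n + 1) → List α) (i : ℕ) (h : i + 1 < n + 1),
      f ⟨i, by omega⟩ ++ f ⟨i + 1, h⟩ <:+: (List.ofFn f).flatten := by
  intro n
  induction n with
  | zero => intro f i h; omega
  | succ n ih =>
    intro f i h
    rcases Nat.eq_zero_or_pos i with rfl | hi
    · rw [List.ofFn_succ, List.flatten_cons, List.ofFn_succ, List.flatten_cons]
      have e0 : f ⟨0, by omega⟩ = f 0 := congrArg f (by ext; simp)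
      have e1 : f ⟨1, h⟩ = f (Fin.succ 0) := congrArg f (by ext; simp)
      rw [e0, e1, ← List.append_assoc]
      exact (List.prefix_append _ _).isInfix
    · obtain ⟨i', rfl⟩ : ∃ i', i = i' + 1 := ⟨i - 1, by omega⟩
      rw [List.ofFn_succ, List.flatten_cons]
      have := ih (fun j => f j.succ) i' (by omega)
      exact this.trans (List.suffix_append _ _).isInfix

lemma last_suffix_flatten {α : Type*} (n : ℕ) (f : Fin (n + 1) → List α) :
    ∃ F, (List.ofFn f).flatten = F ++ f ⟨n, by omega⟩ := by
  refine ⟨(List.ofFn fun i : Fin n => f i.castSucc).flatten, ?_⟩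
  rw [List.ofFn_succ']
  simp only [List.concat_eq_append, List.flatten_append, List.flatten_cons,
    List.flatten_nil, List.append_nil]
  rfl



/-! ### Pair occurrences and the Whitehead graph -/

/-- `hasPair g x i j` : the word `x` witnesses the Whitehead edge between `(i, true)`
and `(j, false)`, either through the pair `a_i a_j` or through the pair `a_j⁻¹ a_i⁻¹`. -/
def hasPair (g : ℕ) (x : List (Letter g)) (i j : Fin g) : Prop :=
  [(i, true), (j, true)] <:+: x ∨ [(j, false), (i, false)] <:+: x

lemma hasPair.mono {g : ℕ} {x x' : List (Letter g)} {i j : Fin g}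
    (h : hasPair g x i j) (hxx' : x <:+: x') : hasPair g x' i j := by
  rcases h with h | h
  · exact Or.inl (h.trans hxx')
  · exact Or.inr (h.trans hxx')

lemma invRev_infix {α : Type*} {l w : List (α × Bool)} (h : l <:+: w) :
    FreeGroup.invRev l <:+: FreeGroup.invRev w := by
  unfold FreeGroup.invRev
  exact (h.map _).reverse

lemma hasPair_invRev {g : ℕ} {y : List (Letter g)} {i j : Fin g}
    (h : [(i, true), (j, true)] <:+: y) :
    hasPair g (FreeGroup.invRev y) i j := by
  right
  have := invRev_infix h
  simpa [FreeGroup.invRev] using this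

lemma adj_of_hasPair {g : ℕ} {x : List (Letter g)} {i j : Fin g}
    (h : hasPair g x i j) :
    (whiteheadGraph g x).Adj (i, true) (j, false) := by
  refine ⟨by simp, ?_⟩
  rcases h with h | h
  · exact Or.inl h
  · exact Or.inr h

/-- The cycle criterion specialised to Whitehead graphs. -/
lemma noCut_of_pairs (g : ℕ) (hg : 2 ≤ g) (x : List (Letter g))
    (h1 : ∀ i : Fin g, hasPair g x i i)
    (h2 : ∀ i : ℕ, (h : i + 1 < g) → hasPair g x ⟨i, by omega⟩ ⟨i + 1, h⟩)
    (h3 : hasPair g x ⟨g - 1, by omega⟩ ⟨0, by omega⟩) :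
    ¬ HasCutVertex (whiteheadGraph g x) := by
  have h2g : 0 < 2 * g := by omega
  set F : ℕ → Letter g := fun k =>
    (⟨k % (2 * g) / 2, by have := Nat.mod_lt k h2g; omega⟩, decide (k % 2 = 1)) with hF
  have hFval : ∀ (k i : ℕ) (b : Bool) (hi : i < g), k % (2 * g) / 2 = i →
      decide (k % 2 = 1) = b → F k = (⟨i, hi⟩, b) := by
    intro k i b hi e1 e2
    rw [hF]
    exact Prod.ext (Fin.ext e1) e2
  apply noCut_of_cycle (2 * g) (by omega) F
  · intro k
    have e1 : (k + 2 * g) % (2 * g) = k % (2 * g) := Nat.add_mod_right _ _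
    have e2 : (k + 2 * g) % 2 = k % 2 := by omega
    rw [hF]
    refine Prod.ext (Fin.ext ?_) ?_
    · simp only [e1]
    · simp only [e2]
  · rintro ⟨i, b⟩
    have hi := i.2
    cases b with
    | false =>
      refine ⟨2 * (i : ℕ), by omega, ?_⟩
      have h' : (2 * (i : ℕ)) % 2 = 0 := by omega
      have := hFval (2 * (i : ℕ)) (i : ℕ) false i.2
        (by rw [Nat.mod_eq_of_lt (by omega)]; omega) (by simp [h'])
      exact this.trans rfl
    | true =>
      refine ⟨2 * (i : ℕ) + 1, by omega, ?_⟩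
      have h' : (2 * (i : ℕ) + 1) % 2 = 1 := by omega
      have := hFval (2 * (i : ℕ) + 1) (i : ℕ) true i.2
        (by rw [Nat.mod_eq_of_lt (by omega)]; omega) (by simp [h'])
      exact this.trans rfl
  · intro k l hk hl heq
    rw [hF] at heq
    have e1 : k % (2 * g) / 2 = l % (2 * g) / 2 :=
      congrArg (fun p : Letter g => (p.1 : ℕ)) heq
    have e2 : decide (k % 2 = 1) = decide (l % 2 = 1) := congrArg Prod.snd heq
    rw [Nat.mod_eq_of_lt hk, Nat.mod_eq_of_lt hl] at e1
    have e3 : (k % 2 = 1) ↔ (l % 2 = 1) := decide_eq_decide.mp e2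
    omega
  · intro k hk
    rcases (by omega : k % 2 = 0 ∨ k % 2 = 1) with hp | hp
    · -- even : edge (i, false) — (i, true)
      have hk1 : k + 1 < 2 * g := by omega
      have e1 : F k = (⟨k / 2, by omega⟩, false) :=
        hFval _ _ _ (by omega) (by rw [Nat.mod_eq_of_lt hk]) (by simp [hp])
      have e2 : F (k + 1) = (⟨k / 2, by omega⟩, true) :=
        hFval _ _ _ (by omega) (by rw [Nat.mod_eq_of_lt hk1]; omega)
          (by have h' : (k + 1) % 2 = 1 := by omega
              simp [h'])
      rw [e1, e2]
      exact (adj_of_hasPair (h1 ⟨k / 2, by omega⟩)).symm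
    · -- odd
      rcases lt_or_ge (k + 1) (2 * g) with hk1 | hk1
      · have hlt : k / 2 + 1 < g := by omega
        have e1 : F k = (⟨k / 2, by omega⟩, true) :=
          hFval _ _ _ (by omega) (by rw [Nat.mod_eq_of_lt hk]) (by simp [hp])
        have e2 : F (k + 1) = (⟨k / 2 + 1, hlt⟩, false) :=
          hFval _ _ _ hlt (by rw [Nat.mod_eq_of_lt hk1]; omega)
            (by have h' : (k + 1) % 2 = 0 := by omega
                simp [h'])
        rw [e1, e2]
        exact adj_of_hasPair (h2 (k / 2) hlt)
      · have hk2 : k = 2 * g - 1 := by omega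
        have e1 : F k = (⟨g - 1, by omega⟩, true) :=
          hFval _ _ _ (by omega) (by rw [Nat.mod_eq_of_lt hk]; omega) (by simp [hp])
        have e2 : F (k + 1) = (⟨0, by omega⟩, false) := by
          refine hFval _ _ _ (by omega) ?_ ?_
          · have h' : (k + 1) % (2 * g) = 0 := by
              have h'' : k + 1 = 2 * g := by omega
              simp [h'']
            rw [h']
          · have h' : (k + 1) % 2 = 0 := by omega
            simp [h']
        rw [e1, e2]
        exact adj_of_hasPair h3

/-! ### The three pair families for the base word -/

lemma blk_mem_flatten (g t : ℕ) (i : Fin g) :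
    blk g t i <:+: (List.ofFn (blk g t)).flatten :=
  List.infix_of_mem_flatten (by simp [List.mem_ofFn])

lemma flatten_prefix_baseWord (g t : ℕ) (h1 : 1 < g) :
    (List.ofFn (blk g t)).flatten <+: baseWord g t h1 := by
  unfold baseWord
  exact ((List.prefix_append _ _).trans (List.prefix_append _ _)).trans
    (List.prefix_append _ _)

lemma pair1_baseWord (g t : ℕ) (h1 : 1 < g) (ht : 1 ≤ t) (i : Fin g) :
    [((i : Fin g), true), (i, true)] <:+: baseWord g t h1 := by
  have ha : [((i : Fin g), true), (i, true)] <:+: blk g t i :=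
    pair_self_infix _ _ (by omega)
  exact (ha.trans (blk_mem_flatten g t i)).trans
    (flatten_prefix_baseWord g t h1).isInfix

lemma pair2_baseWord (g t : ℕ) (h1 : 1 < g) (i : ℕ) (h : i + 1 < g) :
    [((⟨i, by omega⟩ : Fin g), true), ((⟨i + 1, h⟩ : Fin g), true)] <:+:
      baseWord g t h1 := by
  obtain ⟨g', rfl⟩ : ∃ g', g = g' + 1 := ⟨g - 1, by omega⟩
  have hj := junction_flatten g' (blk (g' + 1) t) i h
  have ha : [((⟨i, by omega⟩ : Fin (g' + 1)), true), ((⟨i + 1, h⟩ : Fin (g' + 1)), true)]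
      <:+: blk (g' + 1) t ⟨i, by omega⟩ ++ blk (g' + 1) t ⟨i + 1, h⟩ := by
    have := pair_junction_infix ((⟨i, by omega⟩ : Fin (g' + 1)), true)
      ((⟨i + 1, h⟩ : Fin (g' + 1)), true) (t + 1) (by omega)
      (List.replicate t ((⟨i + 1, h⟩ : Fin (g' + 1)), true))
    simpa [blk, List.replicate_succ] using this
  exact ((ha.trans hj).trans (flatten_prefix_baseWord _ t h1).isInfix)

lemma pair3_baseWord (g t : ℕ) (h1 : 1 < g) :
    [((⟨g - 1, by omega⟩ : Fin g), true), ((⟨0, by omega⟩ : Fin g), true)] <:+: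
      baseWord g t h1 := by
  obtain ⟨g', rfl⟩ : ∃ g', g = g' + 1 := ⟨g - 1, by omega⟩
  obtain ⟨F, hFe⟩ := last_suffix_flatten g' (blk (g' + 1) t)
  have ha : [((⟨g', by omega⟩ : Fin (g' + 1)), true), ((⟨0, by omega⟩ : Fin (g' + 1)), true)]
      <:+: blk (g' + 1) t ⟨g', by omega⟩ ++ blk (g' + 1) t ⟨0, by omega⟩ := by
    have := pair_junction_infix ((⟨g', by omega⟩ : Fin (g' + 1)), true)
      ((⟨0, by omega⟩ : Fin (g' + 1)), true) (t + 1) (by omega)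
      (List.replicate t ((⟨0, by omega⟩ : Fin (g' + 1)), true))
    simpa [blk, List.replicate_succ] using this
  have hb : blk (g' + 1) t ⟨g', by omega⟩ ++ blk (g' + 1) t ⟨0, by omega⟩ <:+:
      baseWord (g' + 1) t h1 := by
    unfold baseWord
    rw [hFe]
    exact ⟨F, blk (g' + 1) t ⟨1, h1⟩ ++ blk (g' + 1) t ⟨0, by omega⟩,
      by simp [List.append_assoc]⟩
  have : (⟨g' + 1 - 1, by omega⟩ : Fin (g' + 1)) = ⟨g', by omega⟩ := rfl
  rw [this]
  exact ha.trans hb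

/-! ### Remaining auxiliary facts -/

lemma invRev_append {α : Type*} (l₁ l₂ : List (α × Bool)) :
    FreeGroup.invRev (l₁ ++ l₂) = FreeGroup.invRev l₂ ++ FreeGroup.invRev l₁ := by
  simp [FreeGroup.invRev]

lemma invRev_flatten_replicate {α : Type*} (n : ℕ) (W : List (α × Bool)) :
    FreeGroup.invRev (List.replicate n W).flatten =
      (List.replicate n (FreeGroup.invRev W)).flatten := by
  induction n with
  | zero => rfl
  | succ n ih =>
    rw [List.replicate_succ, List.flatten_cons, invRev_append, ih,
      List.replicate_succ', List.flatten_append]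
    simp

lemma mem_invRev {α : Type*} {p : α × Bool} {w : List (α × Bool)}
    (hp : p ∈ FreeGroup.invRev w) : (p.1, !p.2) ∈ w := by
  unfold FreeGroup.invRev at hp
  rw [List.mem_reverse] at hp
  obtain ⟨q, hq, rfl⟩ := List.mem_map.mp hp
  simpa using hq

lemma mem_flatten_replicate {α : Type*} {n : ℕ} {W : List α} {p : α}
    (hp : p ∈ (List.replicate n W).flatten) : p ∈ W := by
  obtain ⟨l, hl, hpl⟩ := List.mem_flatten.mp hp
  rwa [List.eq_of_mem_replicate hl] at hpl

lemma hasCut_nil (g : ℕ) (hg : 1 ≤ g) :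
    HasCutVertex (whiteheadGraph g ([] : List (Letter g))) := by
  left
  rintro ⟨hp⟩
  obtain ⟨walk⟩ := hp ((⟨0, by omega⟩ : Fin g), false) ((⟨0, by omega⟩ : Fin g), true)
  cases walk with
  | cons h _ =>
    rcases h with ⟨-, h | h⟩ <;> simp at h

lemma length_le_flatten_length {α : Type*} :
    ∀ (ws : List (List α)), (∀ u ∈ ws, u ≠ []) → ws.length ≤ ws.flatten.length := by
  intro ws
  induction ws with
  | nil => intro; simp
  | cons u ws ih =>
    intro h
    have hu : u ≠ [] := h u (by simp)
    have : 1 ≤ u.length := by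
      cases u with
      | nil => exact absurd rfl hu
      | cons _ _ => simp
    have := ih fun v hv => h v (List.mem_cons_of_mem _ hv)
    simp only [List.flatten_cons, List.length_cons, List.length_append]
    omega

end CutAux

/-- For `g ≥ 4`, `t ≥ 1` and any integer `s`, the unique reduced word representing the power
`b_t^s` in `F_g` has simple `(g+1)`-length at least `|s|`. -/
theorem natAbs_le_simpleLength_bElem_zpow (g : ℕ) (hg : 4 ≤ g)
    (t : ℕ) (ht : 1 ≤ t) (s : ℤ) :
    s.natAbs ≤ simpleLength g (FreeGroup.toWord ((bElem g t) ^ s)) := by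
  rcases eq_or_ne s 0 with rfl | hs
  · simp
  have h1 : 1 < g := by omega
  set W : List (Letter g) := CutAux.baseWord g t h1 with hW
  set n : ℕ := s.natAbs with hn
  have hn1 : 1 ≤ n := Int.natAbs_pos.mpr hs
  have hWtrue : ∀ p ∈ W, p.2 = true := CutAux.mem_baseWord_true g t h1
  have hb : bElem g t = FreeGroup.mk W := CutAux.bElem_eq g t h1
  set L : List (Letter g) := (List.replicate n W).flatten with hL
  have hLtrue : ∀ p ∈ L, p.2 = true := fun p hp =>
    hWtrue p (CutAux.mem_flatten_replicate hp)
  have hWL : W <:+: L := by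
    have hm : n = (n - 1) + 1 := by omega
    rw [hL, hm, List.replicate_succ, List.flatten_cons]
    exact (List.prefix_append _ _).isInfix
  -- the pair families, for a word containing `W` (positive case) or `invRev W`
  have hpairsPos : ∀ x : List (Letter g), W <:+: x →
      ¬ HasCutVertex (whiteheadGraph g x) := by
    intro x hx
    refine CutAux.noCut_of_pairs g (by omega) x (fun i => ?_) (fun i h => ?_) ?_
    · exact CutAux.hasPair.mono (Or.inl (CutAux.pair1_baseWord g t h1 ht i)) hx
    · exact CutAux.hasPair.mono (Or.inl (CutAux.pair2_baseWord g t h1 i h)) hx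
    · exact CutAux.hasPair.mono (Or.inl (CutAux.pair3_baseWord g t h1)) hx
  have hpairsNeg : ∀ x : List (Letter g), FreeGroup.invRev W <:+: x →
      ¬ HasCutVertex (whiteheadGraph g x) := by
    intro x hx
    refine CutAux.noCut_of_pairs g (by omega) x (fun i => ?_) (fun i h => ?_) ?_
    · exact CutAux.hasPair.mono
        (CutAux.hasPair_invRev (CutAux.pair1_baseWord g t h1 ht i)) hx
    · exact CutAux.hasPair.mono
        (CutAux.hasPair_invRev (CutAux.pair2_baseWord g t h1 i h)) hx
    · exact CutAux.hasPair.mono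
        (CutAux.hasPair_invRev (CutAux.pair3_baseWord g t h1)) hx
  have hWnc : ¬ HasCutVertex (whiteheadGraph g W) := hpairsPos W (List.infix_refl W)
  have hWnc' : ¬ HasCutVertex (whiteheadGraph g (FreeGroup.invRev W)) :=
    hpairsNeg _ (List.infix_refl _)
  have bound : ∀ (w : List (Letter g)) (ws : List (List (Letter g)))
      (_ : ¬ HasCutVertex (whiteheadGraph g w))
      (_ : ws.length = n) (_ : ws.flatten = w)
      (_ : ∀ u ∈ ws, ¬ HasCutVertex (whiteheadGraph g u)),
      n ≤ simpleLength g w := by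
    intro w ws hnc hlen hfl hws
    rw [simpleLength, if_neg hnc]
    apply le_csSup
    · refine ⟨w.length, fun m hm => ?_⟩
      obtain ⟨ws', rfl, hfl', hws'⟩ := hm
      have hne : ∀ u ∈ ws', u ≠ [] := by
        intro u hu hnil
        exact hws' u hu (hnil ▸ CutAux.hasCut_nil g (by omega))
      calc ws'.length ≤ ws'.flatten.length := CutAux.length_le_flatten_length ws' hne
        _ = w.length := by rw [hfl']
    · exact ⟨ws, hlen, hfl, hws⟩
  rcases Int.natAbs_eq s with he | he
  · -- positive case
    have hword : FreeGroup.toWord ((bElem g t) ^ s) = L := by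
      rw [he, ← hn, zpow_natCast, hb, FreeGroup.pow_mk, FreeGroup.toWord_mk]
      exact CutAux.reduce_const true _ hLtrue
    rw [hword]
    refine bound L (List.replicate n W) (hpairsPos L hWL) (by simp) rfl ?_
    intro u hu
    rw [List.eq_of_mem_replicate hu]
    exact hWnc
  · -- negative case
    have hword : FreeGroup.toWord ((bElem g t) ^ s) = FreeGroup.invRev L := by
      rw [he, ← hn, zpow_neg, zpow_natCast, hb, FreeGroup.pow_mk, FreeGroup.inv_mk,
        FreeGroup.toWord_mk]
      refine CutAux.reduce_const false _ (fun p hp => ?_)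
      have h' := hLtrue _ (CutAux.mem_invRev hp)
      simpa using h'
    rw [hword]
    refine bound (FreeGroup.invRev L) (List.replicate n (FreeGroup.invRev W))
      (hpairsNeg _ (CutAux.invRev_infix hWL)) (by simp)
      ((CutAux.invRev_flatten_replicate n W).symm) ?_
    intro u hu
    rw [List.eq_of_mem_replicate hu]
    exact hWnc'
end
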